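/- If V ⊆ A^n is a d-code (in particular, any finite set of words of length n in which every two distinct words are dichotomous and every word has exactly d non-star positions), then |V| ≤ 2^d. -/

import Mathlib

/-- The alphabet `A = {0,1,*}`: `some false` is the letter 0, `some true` is
the letter 1, and `none` is the star `*`. -/
abbrev Letter := Option Bool

/-- A word of length `n` over the alphabet `A = {0,1,*}`. -/
abbrev Word (n : ℕ) := Fin n → Letter

/-- `u` and `v` are dichotomous at position `i`: the letters `u i` and `v i`
are the two distinct Boolean letters. -/
def DichotAt {n : ℕ} (u v : Word n) (i : Fin n) : Prop :=
  ∃ b : Bool, u i = some b ∧ v i = some !b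

/-- Two words are dichotomous if they are dichotomous at some position. -/
def Dichotomous {n : ℕ} (u v : Word n) : Prop :=
  ∃ i : Fin n, DichotAt u v i

/-- Two words are neighborly if they are dichotomous at exactly one position. -/
def NeighborlyWords {n : ℕ} (u v : Word n) : Prop :=
  ∃! i : Fin n, DichotAt u v i

/-- A code: every two distinct words are dichotomous. -/
def IsCode {n : ℕ} (V : Finset (Word n)) : Prop :=
  ∀ u ∈ V, ∀ v ∈ V, u ≠ v → Dichotomous u v

/-- A neighborly code: every two distinct words are neighborly. -/
def IsNeighborlyCode {n : ℕ} (V : Finset (Word n)) : Prop :=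
  ∀ u ∈ V, ∀ v ∈ V, u ≠ v → NeighborlyWords u v

/-- A twin pair: two words which are dichotomous at some position and agree
at every other position (hence they are neighborly). -/
def IsTwinPair {n : ℕ} (u v : Word n) : Prop :=
  ∃ i : Fin n, DichotAt u v i ∧ ∀ j : Fin n, j ≠ i → u j = v j

/-- `prop v` is the set of non-star positions of `v`. -/
def propSet {n : ℕ} (v : Word n) : Finset (Fin n) :=
  Finset.univ.filter (fun i => v i ≠ none)

/-- Every `d`-code has at most `2^d` elements. -/
theorem dCode_card_le {n d : ℕ} (V : Finset (Word n))
    (hcode : IsCode V) (hd : ∀ v ∈ V, (propSet v).card = d) :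
    V.card ≤ 2 ^ d := by
  rcases V.eq_empty_or_nonempty with rfl | ⟨v₀, hv₀⟩
  · simp
  have hdn : d ≤ n := by
    rw [← hd v₀ hv₀, propSet]
    exact le_trans (Finset.card_filter_le _ _) (by simp)
  -- cylinder of v
  set F : Word n → Finset (Fin n → Bool) :=
    fun v => Finset.univ.filter (fun x => ∀ i : Fin n, v i ≠ none → v i = some (x i)) with hF
  -- disjointness
  have hdisj : (V : Set (Word n)).PairwiseDisjoint F := by
    intro u hu v hv huv
    refine Finset.disjoint_left.2 ?_
    intro x hxu hxv
    obtain ⟨i, b, hub, hvb⟩ := hcode u hu v hv huv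
    simp only [hF, Finset.mem_filter] at hxu hxv
    have h1 := hxu.2 i (by simp [hub])
    have h2 := hxv.2 i (by simp [hvb])
    rw [hub] at h1; rw [hvb] at h2
    simp only [Option.some.injEq] at h1 h2
    rw [← h1] at h2
    simp at h2
  -- lower bound on cylinder cardinality
  have hcard : ∀ v ∈ V, 2 ^ (n - d) ≤ (F v).card := by
    intro v hv
    have hnone : Fintype.card {i : Fin n // v i = none} = n - d := by
      have : Fintype.card {i : Fin n // v i = none}
          = (Finset.univ.filter (fun i => v i = none)).card := by
        simp [Fintype.card_subtype]
      rw [this]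
      have := Finset.card_filter_add_card_filter_not
        (s := (Finset.univ : Finset (Fin n))) (p := fun i => v i = none)
      have hcomp : (Finset.univ.filter (fun i => ¬ v i = none)).card = d := by
        rw [← hd v hv]; rfl
      have huniv : (Finset.univ : Finset (Fin n)).card = n := by simp
      omega
    have key : Fintype.card ({i : Fin n // v i = none} → Bool) ≤ (F v).card := by
      rw [← Finset.card_univ]
      apply Finset.card_le_card_of_injOn
        (fun y i => if h : v i = none then y ⟨i, h⟩ else (v i).getD false)
      · intro y _
        simp only [hF, Finset.mem_coe, Finset.mem_filter, Finset.mem_univ, true_and]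
        intro i hi
        rcases Option.ne_none_iff_exists'.1 hi with ⟨b, hb⟩
        simp [hb]
      · intro y _ y' _ h
        funext ⟨i, hi⟩
        have := congrFun h i
        simpa [hi] using this
    calc 2 ^ (n - d) = Fintype.card ({i : Fin n // v i = none} → Bool) := by
          simp [Fintype.card_fun, hnone]
      _ ≤ (F v).card := key
  -- total count
  have htotal : V.card * 2 ^ (n - d) ≤ 2 ^ n := by
    calc V.card * 2 ^ (n - d) = ∑ _v ∈ V, 2 ^ (n - d) := by
          rw [Finset.sum_const, smul_eq_mul]
      _ ≤ ∑ v ∈ V, (F v).card := Finset.sum_le_sum hcard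
      _ = (V.biUnion F).card := (Finset.card_biUnion (fun u hu v hv h =>
            hdisj hu hv h)).symm
      _ ≤ Fintype.card (Fin n → Bool) := by
          rw [← Finset.card_univ]; exact Finset.card_le_card (Finset.subset_univ _)
      _ = 2 ^ n := by simp
  have h2 : (2:ℕ) ^ n = 2 ^ d * 2 ^ (n - d) := by
    rw [← pow_add]; congr 1; omega
  rw [h2] at htotal
  exact Nat.le_of_mul_le_mul_right htotal (by positivity)
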